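/- Let u, w ∈ ℝ² be distinct points with w in the cone C₀ᵘ, and let α ∈ (0, π/5) be the clockwise angle from the direction (0,1) to the vector w − u. If α < π/10, then |T_{w,u}| < |T_{u,w}|, i.e. the canonical triangle of the reversed pair is strictly smaller. -/

import Mathlib

noncomputable section

/-- The plane ℝ². -/
abbrev Plane : Type := EuclideanSpace ℝ (Fin 2)

/-- The bisector direction of the `i`-th cone: the unit vector obtained by rotating `(0,1)`
clockwise by `i · 2π/5`. -/
noncomputable def coneDir (i : Fin 5) : Plane :=
  WithLp.toLp 2 ![Real.sin ((i : ℕ) * (2 * Real.pi / 5)), Real.cos ((i : ℕ) * (2 * Real.pi / 5))]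

/-- The cone `Cᵢᵘ`: all points `p ≠ u` such that the angle between `p - u` and the
bisector direction `coneDir i` is less than `π/5`. -/
def cone (u : Plane) (i : Fin 5) : Set Plane :=
  {p | p ≠ u ∧ InnerProductGeometry.angle (p - u) (coneDir i) < Real.pi / 5}

/-- A set of points is in general position if no difference of two distinct points makes an
angle that is an integer multiple of `π/5` with either coordinate axis. -/
def GeneralPosition (P : Set Plane) : Prop :=
  ∀ p ∈ P, ∀ q ∈ P, p ≠ q → ∀ k : ℤ,
    (p - q) 0 * Real.cos (k * (Real.pi / 5)) - (p - q) 1 * Real.sin (k * (Real.pi / 5)) ≠ 0 ∧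
    (p - q) 0 * Real.sin (k * (Real.pi / 5)) + (p - q) 1 * Real.cos (k * (Real.pi / 5)) ≠ 0

/-- `v` is the point of `P` in the cone `Cᵢᵘ` that is closest to `u`, where distance is
measured by projection onto the bisector of the cone. -/
def isClosest (P : Set Plane) (u : Plane) (i : Fin 5) (v : Plane) : Prop :=
  v ∈ P ∧ v ∈ cone u i ∧
    ∀ p ∈ P, p ∈ cone u i → (inner ℝ (v - u) (coneDir i) : ℝ) ≤ inner ℝ (p - u) (coneDir i)

/-- The θ₅-graph of a point set `P`: each `u ∈ P` is joined to the closest point of `P`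
in each of its five cones. -/
def thetaGraph (P : Set Plane) : SimpleGraph Plane where
  Adj u v := u ∈ P ∧ v ∈ P ∧ u ≠ v ∧
    ((∃ i, isClosest P u i v) ∨ (∃ i, isClosest P v i u))
  symm := by
    constructor
    rintro u v ⟨hu, hv, hne, h⟩
    exact ⟨hv, hu, hne.symm, h.symm⟩
  loopless := by
    constructor
    rintro u ⟨-, -, hne, -⟩
    exact hne rfl

/-- The Euclidean length of a walk in the θ₅-graph. -/
noncomputable def walkLength {P : Set Plane} {u v : Plane} (p : (thetaGraph P).Walk u v) : ℝ :=
  (p.darts.map fun d => dist d.toProd.1 d.toProd.2).sum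

/-- The canonical triangle `T_{u,w}` (for `w ∈ Cᵢᵘ`): the closed triangle bounded by the two
boundary rays of `Cᵢᵘ` and the line through `w` perpendicular to the bisector of the cone. -/
def canonicalTriangle (u w : Plane) (i : Fin 5) : Set Plane :=
  {p | (p = u ∨ InnerProductGeometry.angle (p - u) (coneDir i) ≤ Real.pi / 5) ∧
       (inner ℝ (p - u) (coneDir i) : ℝ) ≤ inner ℝ (w - u) (coneDir i)}

/-- The size `|T_{u,w}|` of the canonical triangle, i.e. the length of each of the two sides
incident to the apex `u`. -/
noncomputable def triangleSize (u w : Plane) (i : Fin 5) : ℝ :=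
  (inner ℝ (w - u) (coneDir i) : ℝ) / Real.cos (Real.pi / 5)

/-- If `w` lies in `C₀ᵘ` at clockwise angle `α ∈ (0, π/5)` from the upward vertical
direction and `α < π/10`, then the reversed canonical triangle is strictly smaller:
`|T_{w,u}| < |T_{u,w}|`. -/
theorem reversed_triangle_smaller (u w : Plane) (α r : ℝ)
    (hα : α ∈ Set.Ioo 0 (Real.pi / 5)) (hα10 : α < Real.pi / 10) (hr : 0 < r)
    (hw : w - u = r • (WithLp.toLp 2 ![Real.sin α, Real.cos α] : Plane)) :
    triangleSize w u 3 < triangleSize u w 0 := by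
  obtain ⟨hα0, hα5⟩ := hα
  have hpi := Real.pi_pos
  have hc : (0:ℝ) < Real.cos (Real.pi / 5) := by
    apply Real.cos_pos_of_mem_Ioo
    constructor <;> [linarith; linarith]
  have huw : u - w = (-r) • (WithLp.toLp 2 ![Real.sin α, Real.cos α] : Plane) := by
    rw [← neg_sub, hw, neg_smul]
  unfold triangleSize
  apply div_lt_div_of_pos_right ?_ hc
  rw [hw, huw]
  simp only [coneDir, PiLp.inner_apply, Fin.sum_univ_two, RCLike.inner_apply, conj_trivial,
    PiLp.smul_apply, smul_eq_mul, PiLp.toLp_apply]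
  norm_num
  have h3 : ((3:Fin 5) : ℕ) = 3 := rfl
  push_cast
  have h6 : (3:ℝ) * (2 * Real.pi / 5) = Real.pi + Real.pi / 5 := by ring
  rw [h6]
  simp only [Real.sin_add, Real.cos_add, Real.sin_pi, Real.cos_pi]
  have key : Real.cos (Real.pi / 5 - α) < Real.cos α := by
    apply Real.cos_lt_cos_of_nonneg_of_le_pi hα0.le (by linarith) (by linarith)
  have expand := Real.cos_sub (Real.pi / 5) α
  nlinarith [key, expand]
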